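/- arXiv:1707.02156 — 2 statements merged into one kernel-verified Lean document; each statement's English description precedes it below -/
import Mathlib

section
/- For every natural number n, ∫_{-1}^{1} P_n(t)/√(2 − 2t) dt = 2/(2n+1). -/
open MeasureTheory Real Filter Topology Finset
open scoped RealInnerProductSpace
open Polynomial

/-- Legendre polynomial `P_n(x) = (2^n n!)⁻¹ dⁿ/dxⁿ (x²-1)ⁿ`. -/
noncomputable def legendreP (n : ℕ) (x : ℝ) : ℝ :=
  ((2 : ℝ) ^ n * n.factorial)⁻¹ * iteratedDeriv n (fun t : ℝ => (t ^ 2 - 1) ^ n) x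


lemma iteratedDeriv_poly (n : ℕ) (p : Polynomial ℝ) :
    iteratedDeriv n (fun x => p.eval x) = fun x => (Polynomial.derivative^[n] p).eval x := by
  induction n generalizing p with
  | zero => simp
  | succ n ih =>
    rw [iteratedDeriv_succ']
    have h : deriv (fun x => p.eval x) = fun x => p.derivative.eval x :=
      funext fun x => Polynomial.deriv p
    rw [h, ih p.derivative, Function.iterate_succ_apply]

lemma dvd_iterated (n : ℕ) : ∀ j, j ≤ n → ∃ q : Polynomial ℝ,
    Polynomial.derivative^[j] (((X : Polynomial ℝ)^2 - 1)^n)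
      = ((X : Polynomial ℝ)^2 - 1)^(n-j) * q := by
  intro j
  induction j with
  | zero => intro _; exact ⟨1, by simp⟩
  | succ j ih =>
    intro hj
    obtain ⟨q, hq⟩ := ih (by omega)
    refine ⟨Polynomial.C ((n - j : ℕ) : ℝ) * Polynomial.derivative ((X : Polynomial ℝ)^2 - 1) * q
      + ((X : Polynomial ℝ)^2 - 1) * Polynomial.derivative q, ?_⟩
    rw [Function.iterate_succ_apply', hq, Polynomial.derivative_mul, Polynomial.derivative_pow]
    have e1 : n - j - 1 = n - (j+1) := by omega
    have e2 : n - j = (n - (j+1)) + 1 := by omega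
    rw [e1, e2, pow_succ]
    ring

lemma integ_G : IntervalIntegrable (fun t : ℝ => (2 - 2*t) ^ (-(1/2) : ℝ)) volume (-1) 1 := by
  have h0 : IntervalIntegrable (fun x : ℝ => x ^ (-(1/2) : ℝ)) volume 0 4 :=
    intervalIntegral.intervalIntegrable_rpow' (by norm_num)
  have h1 := (h0.comp_mul_left (c := -2) (h := enorm_ne_top) (h' := enorm_ne_top)).comp_sub_right 1
  norm_num at h1
  have h2 : (fun x : ℝ => (-(2 * (x - 1))) ^ (-(1/2) : ℝ)) = fun t : ℝ => (2 - 2*t) ^ (-(1/2) : ℝ) := by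
    funext x; ring_nf
  rw [h2] at h1
  exact h1.symm

lemma aux_pow_rpow {t : ℝ} (ht : t ≤ 1) (m : ℕ) :
    (2 - 2*t)^m * (2 - 2*t) ^ (-(1/2) - m : ℝ) = (2 - 2*t) ^ (-(1/2) : ℝ) := by
  rcases lt_or_eq_of_le ht with h | h
  · have hp : (0:ℝ) < 2 - 2*t := by linarith
    rw [← Real.rpow_natCast (2-2*t) m, ← Real.rpow_add hp]
    congr 1; ring
  · subst h
    norm_num
    right
    have hne : (-(1/2) - (m:ℝ)) ≠ 0 := by
      intro hc
      rw [sub_eq_zero] at hc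
      have := Nat.cast_nonneg (α := ℝ) m
      norm_num at hc
      linarith
    exact Real.zero_rpow hne

lemma aux_pow_sqrt {t : ℝ} (ht : t ≤ 1) (k : ℕ) :
    (2 - 2*t)^(k+1) * (2 - 2*t) ^ (-(1/2) - k : ℝ) = Real.sqrt (2 - 2*t) := by
  rcases lt_or_eq_of_le ht with h | h
  · have hp : (0:ℝ) < 2 - 2*t := by linarith
    rw [Real.sqrt_eq_rpow, ← Real.rpow_natCast (2-2*t) (k+1), ← Real.rpow_add hp]
    congr 1; push_cast; ring
  · subst h
    norm_num

lemma eval_mul_rpow (m : ℕ) (q : Polynomial ℝ) {t : ℝ} (ht : t ≤ 1) :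
    (((X : Polynomial ℝ)^2 - 1)^m * q).eval t * (2 - 2*t) ^ (-(1/2) - m : ℝ)
      = ((-1:ℝ)^m * 2⁻¹^m * (t+1)^m * q.eval t) * (2 - 2*t) ^ (-(1/2) : ℝ) := by
  have hb : ((t:ℝ)^2 - 1)^m = (t+1)^m * ((-1:ℝ))^m * (2⁻¹:ℝ)^m * (2-2*t)^m := by
    rw [← mul_pow, ← mul_pow, ← mul_pow]; congr 1; ring
  have ha := aux_pow_rpow ht m
  simp only [Polynomial.eval_mul, Polynomial.eval_pow, Polynomial.eval_sub, Polynomial.eval_one,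
    Polynomial.eval_X]
  rw [hb]
  calc (t+1)^m * (-1:ℝ)^m * 2⁻¹^m * (2-2*t)^m * q.eval t * (2-2*t) ^ (-(1/2) - m : ℝ)
      = ((-1:ℝ)^m * 2⁻¹^m * (t+1)^m * q.eval t) * ((2-2*t)^m * (2-2*t) ^ (-(1/2) - m : ℝ)) := by
        ring
    _ = _ := by rw [ha]

lemma eval_mul_rpow_sqrt (k : ℕ) (q : Polynomial ℝ) {t : ℝ} (ht : t ≤ 1) :
    (((X : Polynomial ℝ)^2 - 1)^(k+1) * q).eval t * (2 - 2*t) ^ (-(1/2) - k : ℝ)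
      = ((-1:ℝ)^(k+1) * 2⁻¹^(k+1) * ((t+1)^(k+1) * q.eval t)) * Real.sqrt (2 - 2*t) := by
  have hb : ((t:ℝ)^2 - 1)^(k+1) = (t+1)^(k+1) * ((-1:ℝ))^(k+1) * (2⁻¹:ℝ)^(k+1) * (2-2*t)^(k+1) := by
    rw [← mul_pow, ← mul_pow, ← mul_pow]; congr 1; ring
  have ha := aux_pow_sqrt ht k
  simp only [Polynomial.eval_mul, Polynomial.eval_pow, Polynomial.eval_sub, Polynomial.eval_one,
    Polynomial.eval_X]
  rw [hb]
  calc (t+1)^(k+1) * (-1:ℝ)^(k+1) * 2⁻¹^(k+1) * (2-2*t)^(k+1) * q.eval t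
        * (2-2*t) ^ (-(1/2) - k : ℝ)
      = ((-1:ℝ)^(k+1) * 2⁻¹^(k+1) * ((t+1)^(k+1) * q.eval t))
          * ((2-2*t)^(k+1) * (2-2*t) ^ (-(1/2) - k : ℝ)) := by ring
    _ = _ := by rw [ha]

lemma II_congr {f g : ℝ → ℝ} (h : ∀ t ∈ Set.Ioc (-1:ℝ) 1, f t = g t)
    (hg : IntervalIntegrable g volume (-1) 1) : IntervalIntegrable f volume (-1) 1 := by
  rw [intervalIntegrable_iff, Set.uIoc_of_le (by norm_num : (-1:ℝ) ≤ 1)] at hg ⊢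
  exact hg.congr_fun (fun t ht => (h t ht).symm) measurableSet_Ioc

noncomputable def TT (n : ℕ) : ℝ :=
  ∫ t in (-1:ℝ)..1, (t+1)^n * (2-2*t) ^ (-(1/2) : ℝ)

noncomputable def SS (n k : ℕ) : ℝ :=
  ∫ t in (-1:ℝ)..1,
    (Polynomial.derivative^[n-k] (((X : Polynomial ℝ)^2 - 1)^n)).eval t
      * (2-2*t) ^ (-(1/2) - (k:ℝ))

lemma TT_int (n : ℕ) :
    IntervalIntegrable (fun t : ℝ => (t+1)^n * (2-2*t) ^ (-(1/2):ℝ)) volume (-1) 1 :=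
  integ_G.continuousOn_mul (Continuous.continuousOn (by fun_prop))

lemma SS_int (n k : ℕ) (hk : k ≤ n) :
    IntervalIntegrable (fun t : ℝ =>
      (Polynomial.derivative^[n-k] (((X : Polynomial ℝ)^2 - 1)^n)).eval t
        * (2-2*t) ^ (-(1/2) - (k:ℝ))) volume (-1) 1 := by
  obtain ⟨q, hq⟩ := dvd_iterated n (n-k) (by omega)
  have hnk : n - (n-k) = k := by omega
  rw [hnk] at hq
  apply II_congr (g := fun t : ℝ => ((-1:ℝ)^k * 2⁻¹^k * (t+1)^k * q.eval t) * (2-2*t)^(-(1/2):ℝ))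
  · intro t ht; rw [hq]; exact eval_mul_rpow k q ht.2
  · exact integ_G.continuousOn_mul (Continuous.continuousOn (by fun_prop))

lemma hasDerivAt_lin (x : ℝ) : HasDerivAt (fun t : ℝ => 2 - 2*t) (-2) x := by
  simpa using ((hasDerivAt_id x).const_mul (2:ℝ)).const_sub 2

lemma SS_step (n k : ℕ) (hk : k < n) : SS n k = -(2*(k:ℝ)+1) * SS n (k+1) := by
  obtain ⟨q, hq⟩ := dvd_iterated n (n-(k+1)) (by omega)
  have h1 : n - (n-(k+1)) = k+1 := by omega
  rw [h1] at hq
  set P₁ : Polynomial ℝ := Polynomial.derivative^[n-(k+1)] (((X : Polynomial ℝ)^2 - 1)^n) with hP₁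
  set P₂ : Polynomial ℝ := Polynomial.derivative^[n-k] (((X : Polynomial ℝ)^2 - 1)^n) with hP₂
  have hiter : P₂ = Polynomial.derivative P₁ := by
    rw [hP₁, hP₂]
    have h2 : n - k = (n-(k+1)) + 1 := by omega
    rw [h2, Function.iterate_succ_apply']
  set F : ℝ → ℝ := fun t =>
    ((-1:ℝ)^(k+1) * 2⁻¹^(k+1) * ((t+1)^(k+1) * q.eval t)) * Real.sqrt (2-2*t) with hF
  set g1 : ℝ → ℝ := fun t => P₂.eval t * (2-2*t) ^ (-(1/2) - (k:ℝ)) with hg1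
  set g2 : ℝ → ℝ := fun t => P₁.eval t * (2-2*t) ^ (-(1/2) - ((k+1 : ℕ):ℝ)) with hg2
  set f' : ℝ → ℝ := fun t => g1 t + (2*(k:ℝ)+1) * g2 t with hf'
  have hint1 : IntervalIntegrable g1 volume (-1) 1 := SS_int n k hk.le
  have hint2 : IntervalIntegrable g2 volume (-1) 1 := SS_int n (k+1) hk
  have hf'int : IntervalIntegrable f' volume (-1) 1 := hint1.add (hint2.const_mul _)
  have hcont : ContinuousOn F (Set.Icc (-1:ℝ) 1) := by
    apply Continuous.continuousOn
    have : Continuous fun t : ℝ => Real.sqrt (2-2*t) :=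
      Real.continuous_sqrt.comp (by fun_prop)
    fun_prop
  have hderiv : ∀ x ∈ Set.Ioo (-1:ℝ) 1, HasDerivWithinAt F (f' x) (Set.Ioi x) x := by
    intro x hx
    have hpos : (0:ℝ) < 2 - 2*x := by linarith [hx.2]
    have hrp : HasDerivAt (fun t : ℝ => (2-2*t) ^ (-(1/2) - (k:ℝ)))
        ((-2) * (-(1/2) - (k:ℝ)) * (2-2*x) ^ ((-(1/2) - (k:ℝ)) - 1)) x :=
      (hasDerivAt_lin x).rpow_const (Or.inl hpos.ne')
    have hpol : HasDerivAt (fun t : ℝ => P₁.eval t) (P₂.eval x) x := by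
      have h := P₁.hasDerivAt x
      rwa [← hiter] at h
    have hprod := hpol.mul hrp
    have hev : F =ᶠ[nhds x] (fun t => P₁.eval t * (2-2*t) ^ (-(1/2) - (k:ℝ))) := by
      filter_upwards [Iio_mem_nhds hx.2] with t ht
      have := eval_mul_rpow_sqrt k q (le_of_lt ht)
      rw [← hq] at this
      exact this.symm
    have hD : HasDerivAt F
        (P₂.eval x * (2-2*x) ^ (-(1/2) - (k:ℝ))
          + P₁.eval x * ((-2) * (-(1/2) - (k:ℝ)) * (2-2*x) ^ ((-(1/2) - (k:ℝ)) - 1))) x :=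
      hprod.congr_of_eventuallyEq hev
    have hexp : ((-(1/2) - (k:ℝ)) - 1) = (-(1/2) - ((k+1 : ℕ):ℝ)) := by push_cast; ring
    have hval : P₂.eval x * (2-2*x) ^ (-(1/2) - (k:ℝ))
          + P₁.eval x * ((-2) * (-(1/2) - (k:ℝ)) * (2-2*x) ^ ((-(1/2) - (k:ℝ)) - 1)) = f' x := by
      rw [hexp, hf', hg1, hg2]
      ring
    rw [hval] at hD
    exact hD.hasDerivWithinAt
  have hFTC := intervalIntegral.integral_eq_sub_of_hasDeriv_right_of_le
    (by norm_num : (-1:ℝ) ≤ 1) hcont hderiv hf'int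
  have hF1 : F 1 = 0 := by
    rw [hF]
    norm_num
  have hFm1 : F (-1) = 0 := by
    rw [hF]
    norm_num
  rw [hF1, hFm1, sub_zero] at hFTC
  have hsplit : (∫ t in (-1:ℝ)..1, f' t) = SS n k + (2*(k:ℝ)+1) * SS n (k+1) := by
    rw [hf']
    rw [intervalIntegral.integral_add hint1 (hint2.const_mul _),
      intervalIntegral.integral_const_mul]
    rw [SS, SS, hg1, hg2, hP₁, hP₂]
  rw [hsplit] at hFTC
  linarith

lemma TT_zero : TT 0 = 2 := by
  rw [TT]
  set F : ℝ → ℝ := fun t => -((2-2*t) ^ ((1/2) : ℝ)) with hF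
  have hFs : F = fun t : ℝ => -Real.sqrt (2-2*t) := by
    funext t
    simp only [hF, Real.sqrt_eq_rpow]
  have hcont : ContinuousOn F (Set.Icc (-1:ℝ) 1) := by
    rw [hFs]
    exact (Real.continuous_sqrt.comp (by fun_prop)).neg.continuousOn
  have hderiv : ∀ x ∈ Set.Ioo (-1:ℝ) 1,
      HasDerivWithinAt F ((x+1)^0 * (2-2*x) ^ (-(1/2):ℝ)) (Set.Ioi x) x := by
    intro x hx
    have hpos : (0:ℝ) < 2 - 2*x := by linarith [hx.2]
    have hrp := ((hasDerivAt_lin x).rpow_const (p := (1/2:ℝ)) (Or.inl hpos.ne')).neg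
    have hval : -((-2) * (1/2) * (2-2*x) ^ ((1/2:ℝ) - 1)) = (x+1)^0 * (2-2*x) ^ (-(1/2):ℝ) := by
      norm_num
    rw [hval] at hrp
    exact hrp.hasDerivWithinAt
  have hint : IntervalIntegrable (fun t : ℝ => (t+1)^0 * (2-2*t) ^ (-(1/2):ℝ)) volume (-1) 1 :=
    TT_int 0
  have hFTC := intervalIntegral.integral_eq_sub_of_hasDeriv_right_of_le
    (by norm_num : (-1:ℝ) ≤ 1) hcont hderiv hint
  have h4 : (4:ℝ) ^ ((1:ℝ)/2) = 2 := by
    rw [show (4:ℝ) = 2^(2:ℕ) from by norm_num, ← Real.rpow_natCast 2 2,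
      ← Real.rpow_mul (by norm_num : (0:ℝ) ≤ 2)]
    norm_num
  have h0 : ((0:ℝ) ^ ((1:ℝ)/2)) = 0 := Real.zero_rpow (by norm_num)
  rw [hFTC, hFs]
  norm_num [h4, h0]

lemma TT_step (n : ℕ) : (2*(n:ℝ)+3) * TT (n+1) = (4*(n:ℝ)+4) * TT n := by
  set F : ℝ → ℝ := fun t => -((t+1)^(n+1) * Real.sqrt (2-2*t)) with hF
  set f' : ℝ → ℝ := fun t => (2*(n:ℝ)+3) * ((t+1)^(n+1) * (2-2*t) ^ (-(1/2):ℝ))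
    - (4*(n:ℝ)+4) * ((t+1)^n * (2-2*t) ^ (-(1/2):ℝ)) with hf'
  have hint1 := TT_int (n+1)
  have hint2 := TT_int n
  have hfint : IntervalIntegrable f' volume (-1) 1 :=
    (hint1.const_mul _).sub (hint2.const_mul _)
  have hcont : ContinuousOn F (Set.Icc (-1:ℝ) 1) := by
    apply Continuous.continuousOn
    have hs : Continuous fun t : ℝ => Real.sqrt (2-2*t) :=
      Real.continuous_sqrt.comp (by fun_prop)
    fun_prop
  have hderiv : ∀ x ∈ Set.Ioo (-1:ℝ) 1, HasDerivWithinAt F (f' x) (Set.Ioi x) x := by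
    intro x hx
    have hpos : (0:ℝ) < 2 - 2*x := by linarith [hx.2]
    have hFr : F = fun t => -((t+1)^(n+1) * (2-2*t) ^ ((1/2) : ℝ)) := by
      funext t; simp only [hF, Real.sqrt_eq_rpow]
    have hpow : HasDerivAt (fun t : ℝ => (t+1)^(n+1))
        ((↑(n+1) : ℝ) * (x+1)^(n+1-1) * 1) x :=
      HasDerivAt.fun_pow ((hasDerivAt_id x).add_const 1) (n+1)
    have hrp : HasDerivAt (fun t : ℝ => (2-2*t) ^ ((1/2) : ℝ))
        ((-2) * (1/2) * (2-2*x) ^ ((1/2:ℝ) - 1)) x :=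
      (hasDerivAt_lin x).rpow_const (Or.inl hpos.ne')
    have hD := (hpow.fun_mul hrp).fun_neg
    rw [← hFr] at hD
    have hhalf : (2-2*x) ^ ((1/2) : ℝ) = (2-2*x) * (2-2*x) ^ (-(1/2):ℝ) := by
      nth_rewrite 2 [← Real.rpow_one (2-2*x)]
      rw [← Real.rpow_add hpos]
      norm_num
    have hexp : ((1/2:ℝ) - 1) = -(1/2:ℝ) := by norm_num
    have hval : -(((↑(n+1) : ℝ) * (x+1)^(n+1-1) * 1) * (2-2*x) ^ ((1/2) : ℝ)
        + (x+1)^(n+1) * ((-2) * (1/2) * (2-2*x) ^ ((1/2:ℝ) - 1))) = f' x := by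
      rw [hexp, hhalf, hf']
      simp only [Nat.add_sub_cancel]
      push_cast
      ring
    rw [hval] at hD
    exact hD.hasDerivWithinAt
  have hFTC := intervalIntegral.integral_eq_sub_of_hasDeriv_right_of_le
    (by norm_num : (-1:ℝ) ≤ 1) hcont hderiv hfint
  have hF1 : F 1 = 0 := by rw [hF]; norm_num
  have hFm1 : F (-1) = 0 := by rw [hF]; norm_num
  rw [hF1, hFm1, sub_zero] at hFTC
  have hsplit : (∫ t in (-1:ℝ)..1, f' t)
      = (2*(n:ℝ)+3) * TT (n+1) - (4*(n:ℝ)+4) * TT n := by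
    rw [hf', intervalIntegral.integral_sub (hint1.const_mul _) (hint2.const_mul _),
      intervalIntegral.integral_const_mul, intervalIntegral.integral_const_mul, TT, TT]
  rw [hsplit] at hFTC
  linarith

lemma TT_val (n : ℕ) :
    TT n = 2 * 8^n * ((n.factorial : ℝ))^2 / ((2*n+1).factorial : ℝ) := by
  induction n with
  | zero => simpa using TT_zero
  | succ n ih =>
    have h := TT_step n
    rw [ih] at h
    have hne : (2*(n:ℝ)+3) ≠ 0 := by positivity
    have hf1 : ((2*(n+1)+1).factorial : ℝ)
        = (2*(n:ℝ)+3) * ((2*(n:ℝ)+2) * ((2*n+1).factorial : ℝ)) := by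
      have e : 2*(n+1)+1 = ((2*n+1)+1)+1 := by omega
      rw [e, Nat.factorial_succ, Nat.factorial_succ]
      push_cast
      ring
    have hf2 : (((n+1).factorial : ℝ)) = ((n:ℝ)+1) * (n.factorial : ℝ) := by
      rw [Nat.factorial_succ]; push_cast; ring
    have hT : TT (n+1) = (4*(n:ℝ)+4) * (2 * 8^n * ((n.factorial : ℝ))^2
        / ((2*n+1).factorial : ℝ)) / (2*(n:ℝ)+3) := by
      field_simp at h ⊢
      linarith
    rw [hT, hf1, hf2]
    have hG : ((2*n+1).factorial : ℝ) ≠ 0 := Nat.cast_ne_zero.mpr (Nat.factorial_ne_zero _)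
    field_simp
    ring

lemma SS_zero (n : ℕ) : ∀ j, j ≤ n →
    SS n 0 = (-1:ℝ)^j * (∏ i ∈ Finset.range j, (2*(i:ℝ)+1)) * SS n j := by
  intro j
  induction j with
  | zero => intro _; simp
  | succ j ih =>
    intro hj
    have h0 := ih (by omega)
    rw [SS_step n j (by omega)] at h0
    rw [h0, Finset.prod_range_succ, pow_succ]
    ring

lemma SS_nn (n : ℕ) : SS n n = (-1:ℝ)^n * 2⁻¹^n * TT n := by
  rw [SS, TT]
  have hcg : ∀ t ∈ Set.uIcc (-1:ℝ) 1,
      (Polynomial.derivative^[n-n] (((X : Polynomial ℝ)^2 - 1)^n)).eval t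
          * (2-2*t) ^ (-(1/2) - ((n:ℕ):ℝ))
        = ((-1:ℝ)^n * 2⁻¹^n) * ((t+1)^n * (2-2*t) ^ (-(1/2):ℝ)) := by
    intro t ht
    rw [Set.uIcc_of_le (by norm_num : (-1:ℝ) ≤ 1)] at ht
    rw [Nat.sub_self, Function.iterate_zero_apply]
    have h := eval_mul_rpow n 1 ht.2
    rw [mul_one, Polynomial.eval_one, mul_one] at h
    rw [h]
    ring
  rw [intervalIntegral.integral_congr hcg, intervalIntegral.integral_const_mul]

lemma prod_odd (n : ℕ) :
    (∏ i ∈ Finset.range n, (2*(i:ℝ)+1)) = ((2*n).factorial : ℝ) / (2^n * (n.factorial : ℝ)) := by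
  induction n with
  | zero => norm_num
  | succ n ih =>
    rw [Finset.prod_range_succ, ih]
    have hf1 : ((2*(n+1)).factorial : ℝ)
        = (2*(n:ℝ)+2) * ((2*(n:ℝ)+1) * ((2*n).factorial : ℝ)) := by
      have e : 2*(n+1) = ((2*n)+1)+1 := by omega
      rw [e, Nat.factorial_succ, Nat.factorial_succ]
      push_cast
      ring
    have hf2 : (((n+1).factorial : ℝ)) = ((n:ℝ)+1) * (n.factorial : ℝ) := by
      rw [Nat.factorial_succ]; push_cast; ring
    rw [hf1, hf2]
    have h1 : (n.factorial : ℝ) ≠ 0 := Nat.cast_ne_zero.mpr (Nat.factorial_ne_zero _)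
    have h2 : ((2*n).factorial : ℝ) ≠ 0 := Nat.cast_ne_zero.mpr (Nat.factorial_ne_zero _)
    field_simp
    ring

/-- `∫_{-1}^1 P_n(t)/√(2-2t) dt = 2/(2n+1)`. -/
theorem funk_hecke_eigenvalue (n : ℕ) :
    ∫ t in (-1 : ℝ)..1, legendreP n t / Real.sqrt (2 - 2 * t) = 2 / (2 * n + 1) := by
  set c : ℝ := ((2 : ℝ) ^ n * n.factorial)⁻¹ with hc
  have hL : (∫ t in (-1:ℝ)..1, legendreP n t / Real.sqrt (2 - 2*t)) = c * SS n 0 := by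
    rw [SS, ← intervalIntegral.integral_const_mul]
    apply intervalIntegral.integral_congr
    intro t ht
    beta_reduce
    rw [Set.uIcc_of_le (by norm_num : (-1:ℝ) ≤ 1)] at ht
    have hP : legendreP n t
        = c * (Polynomial.derivative^[n] (((X : Polynomial ℝ)^2 - 1)^n)).eval t := by
      rw [legendreP, hc]
      congr 1
      have hfun : (fun t : ℝ => (t^2-1)^n) = fun t : ℝ => (((X : Polynomial ℝ)^2 - 1)^n).eval t := by
        funext s; simp
      rw [hfun, iteratedDeriv_poly]
    rw [hP]
    have h00 : n - 0 = n := rfl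
    rw [h00]
    rcases lt_or_eq_of_le ht.2 with h | h
    · have hpos : (0:ℝ) < 2 - 2*t := by linarith
      rw [div_eq_mul_inv, Real.sqrt_eq_rpow, ← Real.rpow_neg hpos.le]
      push_cast
      norm_num
      ring
    · subst h
      norm_num
  rw [hL, SS_zero n n le_rfl, SS_nn, TT_val, prod_odd]
  have h1 : ((n.factorial : ℝ)) ≠ 0 := Nat.cast_ne_zero.mpr (Nat.factorial_ne_zero _)
  have h2 : ((2*n).factorial : ℝ) ≠ 0 := Nat.cast_ne_zero.mpr (Nat.factorial_ne_zero _)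
  have hfac : ((2*n+1).factorial : ℝ) = (2*(n:ℝ)+1) * ((2*n).factorial : ℝ) := by
    rw [Nat.factorial_succ]; push_cast; ring
  have h8 : (8:ℝ)^n = 2^n * 2^n * 2^n := by
    rw [← mul_pow, ← mul_pow]; norm_num
  have hneg : (-1:ℝ)^n * (-1:ℝ)^n = 1 := by
    rw [← mul_pow]; norm_num
  rw [hfac, h8, hc]
  have hrearr : ∀ a b d : ℝ, ((2:ℝ)^n * n.factorial)⁻¹ * ((-1:ℝ)^n * a * ((-1:ℝ)^n * b * d))
      = ((2:ℝ)^n * (n.factorial:ℝ))⁻¹ * (a * (b * d)) * ((-1:ℝ)^n * (-1:ℝ)^n) := by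
    intro a b d; ring
  rw [hrearr, hneg, mul_one]
  have h2n1 : (2*(n:ℝ)+1) ≠ 0 := by positivity
  have h2p : ((2:ℝ)^n) ≠ 0 := by positivity
  field_simp
  ring_nf
  rw [← mul_pow]; norm_num
end

section
/- Let p be a natural number, let t_0,…,t_p ∈ (−1,1) be distinct nodes and w_0^G,…,w_p^G real weights such that Σ_{j=0}^p w_j^G q(t_j) = ∫_{-1}^1 q(t) dt for every polynomial q of degree at most 2p+1 (the Gauss–Legendre rule). Set θ_j = arccos(t_j) for j = 0,…,p and φ_k = πk/(p+1) for k = 0,…,2p+1. Then for all 0 ≤ n, n' ≤ p and all integers m, m' with |m| ≤ n and |m'| ≤ n', the discrete inner product satisfies (π/(p+1)) Σ_{j=0}^{p} Σ_{k=0}^{2p+1} w_j^G Y_n^m(θ_j,φ_k) conj(Y_{n'}^{m'}(θ_j,φ_k)) = δ_{nn'} δ_{mm'}. -/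
open MeasureTheory Real Filter Topology Finset
open scoped RealInnerProductSpace

/-- Associated Legendre function `P_n^m` for natural order `m ≥ 0`. -/
noncomputable def assocLegendre (n m : ℕ) (x : ℝ) : ℝ :=
  (-1 : ℝ) ^ m * Real.sqrt (1 - x ^ 2) ^ m * iteratedDeriv m (legendreP n) x

/-- Associated Legendre function of integer order, with
`P_n^{-m} = (-1)^m (n-m)!/(n+m)! P_n^m` for `m ≥ 0`. -/
noncomputable def assocLegendreZ (n : ℕ) (m : ℤ) (x : ℝ) : ℝ :=
  if 0 ≤ m then assocLegendre n m.toNat x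
  else (-1 : ℝ) ^ (-m).toNat * ((((n : ℤ) + m).toNat.factorial : ℝ) /
      (((n : ℤ) - m).toNat.factorial : ℝ)) * assocLegendre n (-m).toNat x

/-- Spherical harmonic `Y_n^m(θ,φ) = √((2n+1)/(4π)·(n-m)!/(n+m)!) P_n^m(cos θ) e^{imφ}`. -/
noncomputable def sphHarm (n : ℕ) (m : ℤ) (θ φ : ℝ) : ℂ :=
  (↑(Real.sqrt ((2 * n + 1) / (4 * Real.pi) *
      ((((n : ℤ) - m).toNat.factorial : ℝ) / (((n : ℤ) + m).toNat.factorial : ℝ)))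
    * assocLegendreZ n m (Real.cos θ)) : ℂ) * Complex.exp (Complex.I * m * φ)

open Polynomial in
section
open MeasureTheory Real Finset Polynomial

lemma iteratedDeriv_polyEval (p : Polynomial ℝ) (k : ℕ) :
    iteratedDeriv k (fun x => p.eval x) = fun x => (derivative^[k] p).eval x := by
  induction k with
  | zero => simp
  | succ k ih =>
    rw [iteratedDeriv_succ, ih, Function.iterate_succ_apply']
    funext x
    exact Polynomial.deriv _

noncomputable def Rpoly (n : ℕ) : Polynomial ℝ := ((X : Polynomial ℝ)^2 - 1)^n

noncomputable def legPoly (n : ℕ) : Polynomial ℝ :=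
  Polynomial.C (((2:ℝ)^n * n.factorial)⁻¹) * derivative^[n] (Rpoly n)

lemma legendreP_eq (n : ℕ) : legendreP n = fun x => (legPoly n).eval x := by
  funext x
  have h : (fun t : ℝ => (t^2-1)^n) = fun t => (Rpoly n).eval t := by
    funext t; simp [Rpoly]
  rw [legendreP, h, iteratedDeriv_polyEval, legPoly]
  simp

lemma iteratedDeriv_legendreP (n m : ℕ) (x : ℝ) :
    iteratedDeriv m (legendreP n) x = (derivative^[m] (legPoly n)).eval x := by
  rw [legendreP_eq, iteratedDeriv_polyEval]

lemma Rpoly_eq_pow_sub_C (n : ℕ) : Rpoly n = ((X:Polynomial ℝ)^2 - Polynomial.C (1:ℝ))^n := by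
  rw [Rpoly, Polynomial.C_1]

lemma Rpoly_monic (n : ℕ) : (Rpoly n).Monic := by
  rw [Rpoly_eq_pow_sub_C]
  exact (Polynomial.monic_X_pow_sub_C (1:ℝ) two_ne_zero).pow n

lemma Rpoly_natDegree (n : ℕ) : (Rpoly n).natDegree = 2 * n := by
  rw [Rpoly_eq_pow_sub_C, (Polynomial.monic_X_pow_sub_C (1:ℝ) two_ne_zero).natDegree_pow,
    Polynomial.natDegree_X_pow_sub_C]
  ring

end
section
open MeasureTheory Real Finset Polynomial

lemma iterate_derivative_factor (N : ℕ) (r : Polynomial ℝ) :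
    ∀ k, k ≤ N → ∃ q, derivative^[k] (Rpoly N * r) = Rpoly (N - k) * q := by
  intro k
  induction k with
  | zero => intro _; exact ⟨r, by simp⟩
  | succ k ih =>
    intro hk
    obtain ⟨q, hq⟩ := ih (Nat.le_of_succ_le hk)
    refine ⟨Polynomial.C ((N - k : ℕ) : ℝ) * derivative ((X:Polynomial ℝ)^2 - 1) * q
      + ((X:Polynomial ℝ)^2 - 1) * derivative q, ?_⟩
    rw [Function.iterate_succ_apply', hq]
    have h1 : Rpoly (N - k) = Rpoly (N - (k+1)) * ((X:Polynomial ℝ)^2 - 1) := by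
      rw [Rpoly, Rpoly, ← pow_succ]
      congr 1
      omega
    have h2 : derivative (Rpoly (N - k)) =
        Polynomial.C ((N - k : ℕ) : ℝ) * Rpoly (N - (k+1)) * derivative ((X:Polynomial ℝ)^2 - 1) := by
      have e : N - k - 1 = N - (k+1) := by omega
      rw [Rpoly, Polynomial.derivative_pow, e, Rpoly]
    rw [Polynomial.derivative_mul, h2, h1]
    ring

lemma Rpoly_eval_one (N : ℕ) (hN : N ≠ 0) : (Rpoly N).eval 1 = 0 := by
  simp [Rpoly, hN]

lemma Rpoly_eval_neg_one (N : ℕ) (hN : N ≠ 0) : (Rpoly N).eval (-1) = 0 := by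
  simp [Rpoly]
  exact fun h => absurd h hN

lemma poly_intervalIntegrable (A : Polynomial ℝ) (a b : ℝ) :
    IntervalIntegrable (fun x => A.eval x) volume a b :=
  (A.continuous).intervalIntegrable a b

lemma poly_ibp (A B : Polynomial ℝ) :
    ∫ x in (-1:ℝ)..1, (derivative A).eval x * B.eval x =
      A.eval 1 * B.eval 1 - A.eval (-1) * B.eval (-1)
      - ∫ x in (-1:ℝ)..1, A.eval x * (derivative B).eval x := by
  have h := intervalIntegral.integral_deriv_mul_eq_sub
    (a := (-1:ℝ)) (b := 1)
    (u := fun x => A.eval x) (v := fun x => B.eval x)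
    (u' := fun x => (derivative A).eval x) (v' := fun x => (derivative B).eval x)
    (fun x _ => A.hasDerivAt x) (fun x _ => B.hasDerivAt x)
    (poly_intervalIntegrable _ _ _) (poly_intervalIntegrable _ _ _)
  have hi1 : IntervalIntegrable (fun x => (derivative A).eval x * B.eval x) volume (-1) 1 :=
    ((derivative A).continuous.mul B.continuous).intervalIntegrable _ _
  have hi2 : IntervalIntegrable (fun x => A.eval x * (derivative B).eval x) volume (-1) 1 :=
    (A.continuous.mul (derivative B).continuous).intervalIntegrable _ _
  rw [intervalIntegral.integral_add hi1 hi2] at h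
  linarith

end
section
open MeasureTheory Real Finset Polynomial

lemma poly_ibp_iter (K : ℕ) : ∀ (u v : Polynomial ℝ),
    (∀ i j, i + j + 1 = K →
      (derivative^[i] u).eval 1 * (derivative^[j] v).eval 1 = 0 ∧
      (derivative^[i] u).eval (-1) * (derivative^[j] v).eval (-1) = 0) →
    ∫ x in (-1:ℝ)..1, (derivative^[K] u).eval x * v.eval x =
      (-1:ℝ)^K * ∫ x in (-1:ℝ)..1, u.eval x * (derivative^[K] v).eval x := by
  induction K with
  | zero => intro u v _; simp
  | succ K ih =>
    intro u v hb
    have h1 : derivative^[K+1] u = derivative^[K] (derivative u) := by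
      rw [Function.iterate_succ_apply]
    rw [h1, ih (derivative u) v (fun i j hij => by
      have h := hb (i+1) j (by omega)
      rwa [Function.iterate_succ_apply] at h)]
    have h2 := poly_ibp u (derivative^[K] v)
    obtain ⟨b1, b2⟩ := hb 0 K (by omega)
    simp only [Function.iterate_zero_apply] at b1 b2
    rw [h2, b1, b2, Function.iterate_succ_apply' derivative K v]
    ring

end
section
open MeasureTheory Real Finset Polynomial

lemma poly_ftc (f : Polynomial ℝ) :
    ∫ x in (-1:ℝ)..1, (derivative f).eval x = f.eval 1 - f.eval (-1) :=
  intervalIntegral.integral_eq_sub_of_hasDerivAt (fun x _ => f.hasDerivAt x)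
    (poly_intervalIntegrable _ _ _)

lemma deriv_X_Rpoly (k : ℕ) :
    derivative ((X:Polynomial ℝ) * Rpoly (k+1)) =
      Polynomial.C ((2*(k+1)+1 : ℕ) : ℝ) * Rpoly (k+1) +
      Polynomial.C ((2*(k+1) : ℕ) : ℝ) * Rpoly k := by
  have hP : derivative ((X:Polynomial ℝ)^2 - 1) = Polynomial.C 2 * X := by
    simp [Polynomial.derivative_X_pow, one_add_one_eq_two]
  rw [Rpoly, Rpoly, Polynomial.derivative_mul, Polynomial.derivative_pow, hP,
    Polynomial.derivative_X]
  push_cast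
  simp only [map_add, map_mul, map_one, map_ofNat]
  ring

lemma Rpoly_integral (n : ℕ) :
    ∫ x in (-1:ℝ)..1, (Rpoly n).eval x =
      (-1:ℝ)^n * 2^(2*n+1) * (n.factorial:ℝ)^2 / ((2*n+1).factorial : ℝ) := by
  induction n with
  | zero => simp [Rpoly]; norm_num
  | succ k ih =>
    have h0 := poly_ftc ((X:Polynomial ℝ) * Rpoly (k+1))
    rw [deriv_X_Rpoly k] at h0
    have he : ∀ x : ℝ, (Polynomial.C ((2*(k+1)+1 : ℕ) : ℝ) * Rpoly (k+1) +
        Polynomial.C ((2*(k+1) : ℕ) : ℝ) * Rpoly k).eval x =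
        ((2*(k+1)+1 : ℕ) : ℝ) * (Rpoly (k+1)).eval x + ((2*(k+1) : ℕ) : ℝ) * (Rpoly k).eval x := by
      intro x; simp
    rw [intervalIntegral.integral_congr (g := fun x => ((2*(k+1)+1 : ℕ) : ℝ) * (Rpoly (k+1)).eval x
        + ((2*(k+1) : ℕ) : ℝ) * (Rpoly k).eval x) (fun x _ => he x)] at h0
    rw [intervalIntegral.integral_add
        (f := fun x => ((2*(k+1)+1 : ℕ) : ℝ) * (Rpoly (k+1)).eval x)
        (g := fun x => ((2*(k+1) : ℕ) : ℝ) * (Rpoly k).eval x)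
        ((continuous_const.mul (Rpoly (k+1)).continuous).intervalIntegrable _ _)
        ((continuous_const.mul (Rpoly k).continuous).intervalIntegrable _ _),
      intervalIntegral.integral_const_mul, intervalIntegral.integral_const_mul, ih] at h0
    have hev1 : ((X:Polynomial ℝ) * Rpoly (k+1)).eval 1 = 0 := by
      simp [Rpoly_eval_one (k+1) (Nat.succ_ne_zero k)]
    have hev2 : ((X:Polynomial ℝ) * Rpoly (k+1)).eval (-1) = 0 := by
      simp [Rpoly_eval_neg_one (k+1) (Nat.succ_ne_zero k)]
    rw [hev1, hev2] at h0
    have hI : ∫ x in (-1:ℝ)..1, (Rpoly (k+1)).eval x =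
        -(((2*(k+1) : ℕ) : ℝ) * ((-1:ℝ)^k * 2^(2*k+1) * (k.factorial:ℝ)^2 /
          ((2*k+1).factorial : ℝ))) / ((2*(k+1)+1 : ℕ) : ℝ) := by
      have hne : ((2*(k+1)+1 : ℕ) : ℝ) ≠ 0 := by positivity
      rw [eq_div_iff hne]
      linear_combination h0
    rw [hI]
    have hfac : ((2*(k+1)+1).factorial : ℝ) =
        ((2*(k+1)+1 : ℕ) : ℝ) * ((2*(k+1) : ℕ) : ℝ) * ((2*k+1).factorial : ℝ) := by
      have h9 : (2*(k+1)+1).factorial = (2*(k+1)+1) * ((2*(k+1)) * (2*k+1).factorial) := by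
        have e1 : 2*(k+1)+1 = (2*k+1+1) + 1 := by ring
        rw [e1, Nat.factorial_succ, Nat.factorial_succ]
        have e2 : 2*k+1+1 = 2*(k+1) := by ring
        rw [e2]
      rw [h9]
      push_cast
      ring
    have hfac2 : ((k+1).factorial : ℝ) = ((k+1:ℕ) : ℝ) * (k.factorial : ℝ) := by
      rw [Nat.factorial_succ]; push_cast; ring
    rw [hfac, hfac2]
    have h1 : ((2*k+1).factorial : ℝ) ≠ 0 := Nat.cast_ne_zero.mpr (Nat.factorial_ne_zero _)
    have h2 : ((2*(k+1)+1 : ℕ) : ℝ) ≠ 0 := by positivity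
    have h3 : ((2*(k+1) : ℕ) : ℝ) ≠ 0 := by positivity
    field_simp
    push_cast
    ring

end
section
open MeasureTheory Real Finset Polynomial

noncomputable def Qpoly (n n' μ : ℕ) : Polynomial ℝ :=
  (1 - (X:Polynomial ℝ)^2)^μ * derivative^[μ] (legPoly n) * derivative^[μ] (legPoly n')

lemma natDegree_legPoly (n : ℕ) : (legPoly n).natDegree ≤ n := by
  refine (Polynomial.natDegree_C_mul_le _ _).trans ?_
  refine ((Rpoly n).natDegree_iterate_derivative n).trans ?_
  rw [Rpoly_natDegree]
  omega

lemma natDegree_iter_legPoly (n μ : ℕ) : (derivative^[μ] (legPoly n)).natDegree ≤ n - μ :=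
  ((legPoly n).natDegree_iterate_derivative μ).trans (Nat.sub_le_sub_right (natDegree_legPoly n) μ)

lemma natDegree_one_sub_X_sq_pow (μ : ℕ) :
    ((1 - (X:Polynomial ℝ)^2)^μ).natDegree ≤ 2*μ := by
  have h : (1 - (X:Polynomial ℝ)^2).natDegree ≤ 2 := by
    refine (Polynomial.natDegree_sub_le _ _).trans ?_
    simp
  exact (Polynomial.natDegree_pow_le_of_le μ h).trans (by omega)

lemma natDegree_Qpoly (n n' μ : ℕ) (h : μ ≤ n) (h' : μ ≤ n') :
    (Qpoly n n' μ).natDegree ≤ n + n' := by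
  refine Polynomial.natDegree_mul_le.trans ?_
  have h1 := Polynomial.natDegree_mul_le
    (p := (1 - (X:Polynomial ℝ)^2)^μ) (q := derivative^[μ] (legPoly n))
  have h2 := natDegree_one_sub_X_sq_pow μ
  have h3 := natDegree_iter_legPoly n μ
  have h4 := natDegree_iter_legPoly n' μ
  omega

lemma one_sub_X_sq_pow_eq (μ : ℕ) :
    (1 - (X:Polynomial ℝ)^2)^μ = Polynomial.C ((-1:ℝ)^μ) * Rpoly μ := by
  have h : (1 - (X:Polynomial ℝ)^2) = Polynomial.C (-1:ℝ) * ((X:Polynomial ℝ)^2 - 1) := by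
    rw [map_neg, map_one]
    ring
  rw [Rpoly, h, mul_pow, ← Polynomial.C_pow]

lemma eval_iter_Rpoly_mul_one (N j : ℕ) (r : Polynomial ℝ) (hj : j < N) :
    (derivative^[j] (Rpoly N * r)).eval 1 = 0 ∧ (derivative^[j] (Rpoly N * r)).eval (-1) = 0 := by
  obtain ⟨q, hq⟩ := iterate_derivative_factor N r j (le_of_lt hj)
  have hNj : N - j ≠ 0 := by omega
  rw [hq]
  constructor <;> simp [Rpoly_eval_one _ hNj, Rpoly_eval_neg_one _ hNj]

end
section
open MeasureTheory Real Finset Polynomial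

lemma iter_deriv_legPoly_eq (n μ : ℕ) :
    derivative^[μ] (legPoly n) =
      Polynomial.C (((2:ℝ)^n * n.factorial)⁻¹) * derivative^[n+μ] (Rpoly n) := by
  rw [legPoly, Polynomial.iterate_derivative_C_mul, ← Function.iterate_add_apply,
    Nat.add_comm μ n]

lemma natDegree_v (n' μ : ℕ) (h' : μ ≤ n') :
    ((1 - (X:Polynomial ℝ)^2)^μ * derivative^[μ] (legPoly n')).natDegree ≤ n' + μ := by
  refine Polynomial.natDegree_mul_le.trans ?_
  have h2 := natDegree_one_sub_X_sq_pow μ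
  have h3 := natDegree_iter_legPoly n' μ
  omega

lemma Qpoly_integral_main (n n' μ : ℕ) (h : μ ≤ n) (h' : μ ≤ n') (hle : n' ≤ n) :
    ∫ x in (-1:ℝ)..1, (Qpoly n n' μ).eval x =
      if n = n' then 2/(2*(n:ℝ)+1) * ((n+μ).factorial:ℝ)/(((n-μ).factorial:ℝ)) else 0 := by
  set c : ℝ := ((2:ℝ)^n * n.factorial)⁻¹ with hc
  set v : Polynomial ℝ := (1 - (X:Polynomial ℝ)^2)^μ * derivative^[μ] (legPoly n') with hv
  have hQ : Qpoly n n' μ = Polynomial.C c * (derivative^[n+μ] (Rpoly n) * v) := by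
    rw [Qpoly, iter_deriv_legPoly_eq n μ, hv]
    ring
  have heval : ∀ x : ℝ, (Qpoly n n' μ).eval x =
      c * ((derivative^[n+μ] (Rpoly n)).eval x * v.eval x) := by
    intro x; rw [hQ]; simp
  rw [intervalIntegral.integral_congr (g := fun x =>
      c * ((derivative^[n+μ] (Rpoly n)).eval x * v.eval x)) (fun x _ => heval x),
    intervalIntegral.integral_const_mul]
  have hvC : v = Polynomial.C ((-1:ℝ)^μ) * (Rpoly μ * derivative^[μ] (legPoly n')) := by
    rw [hv, one_sub_X_sq_pow_eq]
    ring
  have hbound : ∀ i j, i + j + 1 = n + μ →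
      (derivative^[i] (Rpoly n)).eval 1 * (derivative^[j] v).eval 1 = 0 ∧
      (derivative^[i] (Rpoly n)).eval (-1) * (derivative^[j] v).eval (-1) = 0 := by
    intro i j hij
    by_cases hi : i < n
    · have h1 := eval_iter_Rpoly_mul_one n i 1 hi
      rw [mul_one] at h1
      exact ⟨by rw [h1.1, zero_mul], by rw [h1.2, zero_mul]⟩
    · have hjμ : j < μ := by omega
      have h2 := eval_iter_Rpoly_mul_one μ j (derivative^[μ] (legPoly n')) hjμ
      have h3 : derivative^[j] v =
          Polynomial.C ((-1:ℝ)^μ) * derivative^[j] (Rpoly μ * derivative^[μ] (legPoly n')) := by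
        rw [hvC, Polynomial.iterate_derivative_C_mul]
      constructor
      · rw [h3]; simp [h2.1]
      · rw [h3]; simp [h2.2]
  rw [poly_ibp_iter (n+μ) (Rpoly n) v hbound]
  by_cases hcase : n = n'
  · subst hcase
    rw [if_pos rfl]
    have hdegv : v.natDegree ≤ n + μ := natDegree_v n μ h
    have hDv : derivative^[n+μ] v =
        Polynomial.C (((n+μ).factorial : ℝ) * v.coeff (n+μ)) := by
      have hdeg0 : (derivative^[n+μ] v).natDegree ≤ 0 :=
        (v.natDegree_iterate_derivative (n+μ)).trans (by omega)
      rw [Polynomial.eq_C_of_natDegree_le_zero hdeg0, Polynomial.coeff_iterate_derivative]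
      simp [Nat.descFactorial_self, Nat.smul_one_eq_cast]
    have hcoeffR : (Rpoly μ).coeff (2*μ) = 1 := by
      have := (Rpoly_monic μ).coeff_natDegree
      rwa [Rpoly_natDegree] at this
    have hcoeffD : (Polynomial.C c * derivative^[n+μ] (Rpoly n)).coeff (n-μ) =
        c * ((2*n).descFactorial (n+μ) : ℝ) := by
      rw [Polynomial.coeff_C_mul, Polynomial.coeff_iterate_derivative]
      have e : n - μ + (n + μ) = 2*n := by omega
      rw [e]
      have hcn : (Rpoly n).coeff (2*n) = 1 := by
        have := (Rpoly_monic n).coeff_natDegree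
        rwa [Rpoly_natDegree] at this
      rw [hcn]
      simp [Nat.smul_one_eq_cast]
    have hcoeffv : v.coeff (n+μ) = (-1:ℝ)^μ * (c * ((2*n).descFactorial (n+μ) : ℝ)) := by
      rw [hvC, iter_deriv_legPoly_eq n μ, Polynomial.coeff_C_mul, ← hc]
      congr 1
      have e2 : n + μ = 2*μ + (n - μ) := by omega
      have hmul := Polynomial.coeff_mul_add_eq_of_natDegree_le (f := Rpoly μ)
        (g := Polynomial.C c * derivative^[n+μ] (Rpoly n)) (df := 2*μ) (dg := n - μ)
        (le_of_eq (Rpoly_natDegree μ))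
        ((Polynomial.natDegree_C_mul_le _ _).trans (((Rpoly n).natDegree_iterate_derivative
          (n+μ)).trans (by rw [Rpoly_natDegree]; omega)))
      rw [← e2] at hmul
      rw [hmul, hcoeffR, one_mul, hcoeffD]
    rw [hDv]
    have hevalDv : ∀ x : ℝ, (Rpoly n).eval x *
        (Polynomial.C (((n+μ).factorial : ℝ) * v.coeff (n+μ))).eval x =
        (Rpoly n).eval x * (((n+μ).factorial : ℝ) * v.coeff (n+μ)) := by
      intro x; simp
    rw [intervalIntegral.integral_congr (g := fun x => (Rpoly n).eval x *
        (((n+μ).factorial : ℝ) * v.coeff (n+μ))) (fun x _ => hevalDv x),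
      intervalIntegral.integral_mul_const, Rpoly_integral, hcoeffv]
    -- pure algebra now
    have hdf : ((n-μ).factorial : ℝ) * ((2*n).descFactorial (n+μ) : ℝ) = ((2*n).factorial : ℝ) := by
      have e3 : 2*n - (n+μ) = n - μ := by omega
      have := Nat.factorial_mul_descFactorial (n := 2*n) (k := n+μ) (by omega)
      rw [e3] at this
      exact_mod_cast congrArg (Nat.cast : ℕ → ℝ) this
    have hfac21 : ((2*n+1).factorial : ℝ) = ((2*n+1 : ℕ) : ℝ) * ((2*n).factorial : ℝ) := by
      rw [Nat.factorial_succ]; push_cast; ring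
    have hsign : (-1:ℝ)^(n+μ) * ((-1:ℝ)^n * (-1:ℝ)^μ) = 1 := by
      rw [← pow_add, ← pow_add, show n + μ + (n + μ) = 2*(n+μ) by ring, pow_mul]
      norm_num
    have hne1 : ((n-μ).factorial : ℝ) ≠ 0 := Nat.cast_ne_zero.mpr (Nat.factorial_ne_zero _)
    have hne2 : ((2*n).factorial : ℝ) ≠ 0 := Nat.cast_ne_zero.mpr (Nat.factorial_ne_zero _)
    have hne3 : ((n).factorial : ℝ) ≠ 0 := Nat.cast_ne_zero.mpr (Nat.factorial_ne_zero _)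
    have hne4 : (2:ℝ)^n ≠ 0 := by positivity
    have hne5 : (2*(n:ℝ)+1) ≠ 0 := by positivity
    have hne6 : ((2*n+1).factorial : ℝ) ≠ 0 := Nat.cast_ne_zero.mpr (Nat.factorial_ne_zero _)
    rw [hc]
    field_simp
    rw [hfac21]
    push_cast
    linear_combination ((2:ℝ)^(2*n+1) * (((2*n).descFactorial (n+μ) : ℕ):ℝ) * (2*(n:ℝ)+1)
        * (((n-μ).factorial:ℕ):ℝ)) * hsign
      + ((2:ℝ)^(2*n+1) * (2*(n:ℝ)+1)) * hdf
  · rw [if_neg hcase]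
    have hlt : n' < n := lt_of_le_of_ne hle (Ne.symm hcase)
    have hdegv : v.natDegree < n + μ := lt_of_le_of_lt (natDegree_v n' μ h') (by omega)
    rw [Polynomial.iterate_derivative_eq_zero hdegv]
    simp

end
section
open MeasureTheory Real Finset Polynomial

lemma Qpoly_integral' (n n' μ : ℕ) (h : μ ≤ n) (h' : μ ≤ n') :
    ∫ x in (-1:ℝ)..1, (Qpoly n n' μ).eval x =
      if n = n' then 2/(2*(n:ℝ)+1) * ((n+μ).factorial:ℝ)/(((n-μ).factorial:ℝ)) else 0 := by
  rcases le_total n' n with hle | hle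
  · exact Qpoly_integral_main n n' μ h h' hle
  · have hsymm : Qpoly n n' μ = Qpoly n' n μ := by rw [Qpoly, Qpoly]; ring
    rw [hsymm, Qpoly_integral_main n' n μ h' h hle]
    by_cases he : n = n'
    · subst he; simp
    · rw [if_neg (fun hh => he hh.symm), if_neg he]

lemma assocLegendre_mul (n n' μ : ℕ) (x : ℝ) (hx : 0 ≤ 1 - x^2) :
    assocLegendre n μ x * assocLegendre n' μ x = (Qpoly n n' μ).eval x := by
  rw [assocLegendre, assocLegendre, iteratedDeriv_legendreP, iteratedDeriv_legendreP]
  have hQ : (Qpoly n n' μ).eval x = (1-x^2)^μ * ((derivative^[μ] (legPoly n)).eval x *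
      (derivative^[μ] (legPoly n')).eval x) := by
    simp [Qpoly]
    ring
  rw [hQ]
  have h1 : (-1:ℝ)^μ * (-1:ℝ)^μ = 1 := by rw [← mul_pow]; norm_num
  have hs : Real.sqrt (1-x^2)^μ * Real.sqrt (1-x^2)^μ = (1-x^2)^μ := by
    rw [← mul_pow, Real.mul_self_sqrt hx]
  calc ((-1:ℝ)^μ * Real.sqrt (1-x^2)^μ * (derivative^[μ] (legPoly n)).eval x) *
      ((-1:ℝ)^μ * Real.sqrt (1-x^2)^μ * (derivative^[μ] (legPoly n')).eval x)
      = ((-1:ℝ)^μ * (-1:ℝ)^μ) * ((Real.sqrt (1-x^2)^μ * Real.sqrt (1-x^2)^μ) *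
        ((derivative^[μ] (legPoly n)).eval x * (derivative^[μ] (legPoly n')).eval x)) := by ring
    _ = _ := by rw [h1, hs, one_mul]

lemma exp_sum_zero (p : ℕ) (d : ℤ) (hd : d ≠ 0) (hsize : d.natAbs < 2*p+2) :
    ∑ k ∈ Finset.range (2*p+2), Complex.exp (Complex.I * d * (Real.pi * k / (p+1))) = 0 := by
  set z : ℂ := Complex.exp (Complex.I * d * (Real.pi / (p+1))) with hz
  have hterm : ∀ k : ℕ, Complex.exp (Complex.I * d * (Real.pi * k / (p+1))) = z ^ k := by
    intro k
    rw [hz, ← Complex.exp_nat_mul]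
    congr 1
    push_cast
    ring
  have hz1 : z ≠ 1 := by
    have hp1R : ((p:ℝ)+1) ≠ 0 := by positivity
    intro hcon
    rw [hz, Complex.exp_eq_one_iff] at hcon
    obtain ⟨nn, hnn⟩ := hcon
    have h1 : Complex.I * (d:ℂ) * ((Real.pi:ℂ)/((p:ℂ)+1)) =
        (((d:ℝ) * Real.pi/((p:ℝ)+1) : ℝ):ℂ) * Complex.I := by push_cast; ring
    have h2 : (nn:ℂ) * (2*(Real.pi:ℂ)*Complex.I) = ((2*(nn:ℝ)*Real.pi : ℝ):ℂ) * Complex.I := by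
      push_cast; ring
    rw [h1, h2] at hnn
    have h3 := mul_right_cancel₀ Complex.I_ne_zero hnn
    have h4 : (d:ℝ) * Real.pi/((p:ℝ)+1) = 2*(nn:ℝ)*Real.pi := by exact_mod_cast h3
    rw [div_eq_iff hp1R] at h4
    have h6 : (d:ℝ) = 2*(nn:ℝ)*((p:ℝ)+1) :=
      mul_right_cancel₀ Real.pi_ne_zero (by linear_combination h4)
    have heqZ : d = 2*nn*((p:ℤ)+1) := by exact_mod_cast h6
    rcases lt_trichotomy nn 0 with hn | hn | hn
    · have hb : d ≤ -(2*((p:ℤ)+1)) := by nlinarith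
      omega
    · rw [hn] at heqZ
      simp at heqZ
      exact hd heqZ
    · have hb : 2*((p:ℤ)+1) ≤ d := by nlinarith
      omega
  calc ∑ k ∈ Finset.range (2*p+2), Complex.exp (Complex.I * d * (Real.pi * k / (p+1)))
      = ∑ k ∈ Finset.range (2*p+2), z ^ k := by
        exact Finset.sum_congr rfl (fun k _ => hterm k)
    _ = (z ^ (2*p+2) - 1) / (z - 1) := geom_sum_eq hz1 _
    _ = 0 := by
        have hzpow : z ^ (2*p+2) = 1 := by
          rw [hz, ← Complex.exp_nat_mul]
          have : ((2*p+2 : ℕ) : ℂ) * (Complex.I * d * (Real.pi / (p+1))) =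
              (d:ℂ) * (2 * Real.pi * Complex.I) := by
            have hp1 : ((p:ℂ)+1) ≠ 0 := by
              have he : ((p:ℂ)+1) = ((p+1 : ℕ) : ℂ) := by push_cast; ring
              rw [he]
              exact_mod_cast Nat.succ_ne_zero p
            field_simp
            push_cast
            ring
          rw [this]
          exact Complex.exp_int_mul_two_pi_mul_I d
        rw [hzpow]
        simp

lemma sqrt_ratio (c A B : ℝ) (hc : 0 ≤ c) (hA : 0 < A) (hB : 0 < B) :
    Real.sqrt (c * (A/B)) * (B/A) = Real.sqrt (c * (B/A)) := by
  have h : c * (B/A) = c * (A/B) * (B/A)^2 := by field_simp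
  rw [h, Real.sqrt_mul (mul_nonneg hc (by positivity)) ((B/A)^2),
    Real.sqrt_sq (by positivity)]

end
section
open MeasureTheory Real Finset Polynomial

noncomputable def cfac (n μ : ℕ) : ℝ :=
  Real.sqrt ((2*(n:ℝ)+1)/(4*Real.pi) * (((n-μ).factorial:ℝ)/(((n+μ).factorial:ℝ))))

noncomputable def bfun (n : ℕ) (m : ℤ) (x : ℝ) : ℝ :=
  Real.sqrt ((2*(n:ℝ)+1)/(4*Real.pi) *
    ((((n:ℤ)-m).toNat.factorial:ℝ)/((((n:ℤ)+m).toNat.factorial:ℝ)))) * assocLegendreZ n m x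

lemma sphHarm_eq (n : ℕ) (m : ℤ) (θ φ : ℝ) :
    sphHarm n m θ φ = ((bfun n m (Real.cos θ) : ℝ) : ℂ) * Complex.exp (Complex.I*m*φ) := rfl

lemma bfun_eq (n : ℕ) (m : ℤ) (hm1 : -(n:ℤ) ≤ m) (hm2 : m ≤ n) (x : ℝ) :
    bfun n m x = (if m < 0 then (-1:ℝ)^m.natAbs else 1) *
      (cfac n m.natAbs * assocLegendre n m.natAbs x) := by
  by_cases h0 : 0 ≤ m
  · rw [if_neg (not_lt.mpr h0), bfun, assocLegendreZ, if_pos h0, cfac]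
    have e1 : ((n:ℤ)-m).toNat = n - m.natAbs := by omega
    have e2 : ((n:ℤ)+m).toNat = n + m.natAbs := by omega
    have e3 : m.toNat = m.natAbs := by omega
    rw [e1, e2, e3, one_mul]
  · have hlt : m < 0 := not_le.mp h0
    rw [if_pos hlt, bfun, assocLegendreZ, if_neg h0, cfac]
    have e1 : ((n:ℤ)-m).toNat = n + m.natAbs := by omega
    have e2 : ((n:ℤ)+m).toNat = n - m.natAbs := by omega
    have e3 : (-m).toNat = m.natAbs := by omega
    rw [e1, e2, e3]
    have hA : (0:ℝ) < ((n+m.natAbs).factorial:ℝ) := Nat.cast_pos.mpr (Nat.factorial_pos _)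
    have hB : (0:ℝ) < ((n-m.natAbs).factorial:ℝ) := Nat.cast_pos.mpr (Nat.factorial_pos _)
    have hc : (0:ℝ) ≤ (2*(n:ℝ)+1)/(4*Real.pi) := by
      have := Real.pi_pos
      positivity
    have key := sqrt_ratio ((2*(n:ℝ)+1)/(4*Real.pi)) ((n+m.natAbs).factorial:ℝ)
      ((n-m.natAbs).factorial:ℝ) hc hA hB
    rw [← key]
    ring

lemma bfun_mul (n n' : ℕ) (m : ℤ) (hm1 : -(n:ℤ) ≤ m) (hm2 : m ≤ n)
    (hm'1 : -(n':ℤ) ≤ m) (hm'2 : m ≤ n') (x : ℝ) :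
    bfun n m x * bfun n' m x = cfac n m.natAbs * cfac n' m.natAbs *
      (assocLegendre n m.natAbs x * assocLegendre n' m.natAbs x) := by
  rw [bfun_eq n m hm1 hm2 x, bfun_eq n' m hm'1 hm'2 x]
  by_cases h0 : m < 0
  · rw [if_pos h0]
    have h1 : (-1:ℝ)^m.natAbs * (-1:ℝ)^m.natAbs = 1 := by rw [← mul_pow]; norm_num
    calc ((-1:ℝ)^m.natAbs * (cfac n m.natAbs * assocLegendre n m.natAbs x)) *
        ((-1:ℝ)^m.natAbs * (cfac n' m.natAbs * assocLegendre n' m.natAbs x))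
        = ((-1:ℝ)^m.natAbs * (-1:ℝ)^m.natAbs) * (cfac n m.natAbs * cfac n' m.natAbs *
          (assocLegendre n m.natAbs x * assocLegendre n' m.natAbs x)) := by ring
      _ = _ := by rw [h1, one_mul]
  · rw [if_neg h0]
    ring

end

/-- Discrete orthogonality of the spherical harmonics on the Gaussian spherical grid:
Gauss–Legendre nodes `t_j = cos θ_j` in `θ` and `2p+2` equispaced points in `φ`. -/
theorem discrete_orthogonality (p : ℕ) (t : Fin (p + 1) → ℝ) (w : Fin (p + 1) → ℝ)
    (ht_mem : ∀ j, t j ∈ Set.Ioo (-1 : ℝ) 1) (ht_inj : Function.Injective t)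
    (hq : ∀ q : Polynomial ℝ, q.natDegree ≤ 2 * p + 1 →
      ∑ j, w j * q.eval (t j) = ∫ x in (-1 : ℝ)..1, q.eval x)
    (n n' : ℕ) (hn : n ≤ p) (hn' : n' ≤ p) (m m' : ℤ)
    (hm1 : -(n : ℤ) ≤ m) (hm2 : m ≤ n) (hm'1 : -(n' : ℤ) ≤ m') (hm'2 : m' ≤ n') :
    ((Real.pi / (p + 1) : ℝ) : ℂ) * ∑ j, ∑ k ∈ Finset.range (2 * p + 2),
        (w j : ℂ) * sphHarm n m (Real.arccos (t j)) (Real.pi * k / (p + 1))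
          * (starRingEnd ℂ) (sphHarm n' m' (Real.arccos (t j)) (Real.pi * k / (p + 1))) =
      if n = n' ∧ m = m' then 1 else 0 := by
  have hcos : ∀ j, Real.cos (Real.arccos (t j)) = t j := fun j =>
    Real.cos_arccos (le_of_lt (ht_mem j).1) (le_of_lt (ht_mem j).2)
  have hterm : ∀ (j : Fin (p+1)) (k : ℕ),
      (w j : ℂ) * sphHarm n m (Real.arccos (t j)) (Real.pi * k / (p+1))
        * (starRingEnd ℂ) (sphHarm n' m' (Real.arccos (t j)) (Real.pi * k / (p+1)))
      = ((w j * (bfun n m (t j) * bfun n' m' (t j)) : ℝ) : ℂ)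
        * Complex.exp (Complex.I * ((m:ℂ) - (m':ℂ)) * ((Real.pi * k / (p+1) : ℝ) : ℂ)) := by
    intro j k
    rw [sphHarm_eq, sphHarm_eq, hcos j]
    rw [map_mul, Complex.conj_ofReal, ← Complex.exp_conj]
    have hconj : (starRingEnd ℂ) (Complex.I * (m':ℂ) * ((Real.pi * k / (p+1) : ℝ):ℂ)) =
        Complex.I * (-(m':ℂ)) * ((Real.pi * k / (p+1) : ℝ):ℂ) := by
      simp [map_mul, Complex.conj_I, Complex.conj_ofReal]
    rw [hconj]
    have hexp : Complex.exp (Complex.I * (m:ℂ) * ((Real.pi * k / (p+1) : ℝ):ℂ)) *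
        Complex.exp (Complex.I * (-(m':ℂ)) * ((Real.pi * k / (p+1) : ℝ):ℂ)) =
        Complex.exp (Complex.I * ((m:ℂ)-(m':ℂ)) * ((Real.pi * k / (p+1) : ℝ):ℂ)) := by
      rw [← Complex.exp_add]
      congr 1
      ring
    rw [← hexp]
    push_cast
    ring
  have hsum : ∀ (j : Fin (p+1)), (∑ k ∈ Finset.range (2*p+2),
      (w j : ℂ) * sphHarm n m (Real.arccos (t j)) (Real.pi * k / (p+1))
        * (starRingEnd ℂ) (sphHarm n' m' (Real.arccos (t j)) (Real.pi * k / (p+1))))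
      = ((w j * (bfun n m (t j) * bfun n' m' (t j)) : ℝ) : ℂ)
        * ∑ k ∈ Finset.range (2*p+2),
          Complex.exp (Complex.I * ((m:ℂ) - (m':ℂ)) * ((Real.pi * k / (p+1) : ℝ) : ℂ)) := by
    intro j
    rw [Finset.mul_sum]
    exact Finset.sum_congr rfl (fun k _ => hterm j k)
  rw [Finset.sum_congr rfl (fun j _ => hsum j), ← Finset.sum_mul]
  by_cases hmm : m = m'
  · subst hmm
    have hE : (∑ k ∈ Finset.range (2*p+2),
        Complex.exp (Complex.I * ((m:ℂ) - (m:ℂ)) * ((Real.pi * k / (p+1) : ℝ) : ℂ)))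
        = ((2*p+2 : ℕ) : ℂ) := by
      simp
    rw [hE]
    have hμn : m.natAbs ≤ n := by omega
    have hμn' : m.natAbs ≤ n' := by omega
    set μ := m.natAbs with hμ
    have hS : ∑ j, (w j * (bfun n m (t j) * bfun n' m (t j)) : ℝ) =
        cfac n μ * cfac n' μ *
          (if n = n' then 2/(2*(n:ℝ)+1) * ((n+μ).factorial:ℝ)/(((n-μ).factorial:ℝ)) else 0) := by
      have hb : ∀ j : Fin (p+1), w j * (bfun n m (t j) * bfun n' m (t j)) =
          cfac n μ * cfac n' μ * (w j * (Qpoly n n' μ).eval (t j)) := by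
        intro j
        have hx : (0:ℝ) ≤ 1 - (t j)^2 := by
          have h1 := (ht_mem j).1
          have h2 := (ht_mem j).2
          nlinarith
        rw [bfun_mul n n' m hm1 hm2 hm'1 hm'2 (t j), assocLegendre_mul n n' μ (t j) hx]
        ring
      rw [Finset.sum_congr rfl (fun j _ => hb j), ← Finset.mul_sum]
      congr 1
      rw [hq (Qpoly n n' μ) ((natDegree_Qpoly n n' μ hμn hμn').trans (by omega)),
        Qpoly_integral' n n' μ hμn hμn']
    rw [← Complex.ofReal_sum, ← Complex.ofReal_natCast ((2*p+2 : ℕ)), ← Complex.ofReal_mul,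
      ← Complex.ofReal_mul, hS]
    by_cases hnn : n = n'
    · subst hnn
      have hif : (if n = n ∧ m = m then (1:ℂ) else 0) = ((1:ℝ):ℂ) := by norm_num
      rw [hif]
      congr 1
      have hcc : cfac n μ * cfac n μ = (2*(n:ℝ)+1)/(4*Real.pi) *
          (((n-μ).factorial:ℝ)/(((n+μ).factorial:ℝ))) := by
        rw [cfac, Real.mul_self_sqrt]
        have := Real.pi_pos
        positivity
      rw [hcc]
      have hπ := Real.pi_pos
      have hf1 : (0:ℝ) < ((n-μ).factorial:ℝ) := Nat.cast_pos.mpr (Nat.factorial_pos _)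
      have hf2 : (0:ℝ) < ((n+μ).factorial:ℝ) := Nat.cast_pos.mpr (Nat.factorial_pos _)
      have hp1 : (0:ℝ) < (p:ℝ)+1 := by positivity
      have h2n : (0:ℝ) < 2*(n:ℝ)+1 := by positivity
      field_simp
      rw [if_pos trivial]
      field_simp
      push_cast
      ring
    · have hif : (if n = n' ∧ m = m then (1:ℂ) else 0) = 0 := by simp [hnn]
      rw [if_neg hnn, hif]
      push_cast
      ring
  · have hd0 : m - m' ≠ 0 := sub_ne_zero.mpr hmm
    have hdsize : (m - m').natAbs < 2*p+2 := by omega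
    have hE : (∑ k ∈ Finset.range (2*p+2),
        Complex.exp (Complex.I * ((m:ℂ) - (m':ℂ)) * ((Real.pi * k / (p+1) : ℝ) : ℂ)))
        = 0 := by
      rw [← exp_sum_zero p (m - m') hd0 hdsize]
      refine Finset.sum_congr rfl (fun k _ => ?_)
      congr 1
      push_cast
      ring
    have hif : (if n = n' ∧ m = m' then (1:ℂ) else 0) = 0 := by simp [hmm]
    rw [hE, hif]
    ring
end
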